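/- Let α : ℤ → ℝ be a finitely supported mask satisfying Σ_{i∈ℤ} α_{2i} = Σ_{i∈ℤ} α_{2i+1} = 1, and let ζ : ℤ → ℝ be absolutely summable with Σ_{i∈ℤ} ζ_i = 1 and K_ζ := 2 Σ_{i∈ℤ} |ζ_i|·|i| < ∞. Then for every bounded sequence c : ℤ → ℝ with Δc := sup_{j∈ℤ} |c_{j+1} − c_j| < ∞, the detail sequence d := c − S_α(D_ζ(c)) satisfies ‖d‖_∞ ≤ (K_ζ·‖α‖₁ + K_α·‖ζ‖₁)·Δc, where K_α := 2 Σ_{i∈ℤ} |α_i|·|i|, ‖α‖₁ := Σ_{i∈ℤ}|α_i|, and ‖ζ‖₁ := Σ_{i∈ℤ}|ζ_i|. -/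

import Mathlib

noncomputable section

/-- Sup norm of a bi-infinite real sequence. -/
def supNorm (c : ℤ → ℝ) : ℝ := ⨆ j, |c j|

/-- Supremum of absolute first differences. -/
def deltaSup (c : ℤ → ℝ) : ℝ := ⨆ j, |c (j + 1) - c j|

/-- ℓ¹ norm of a sequence. -/
def l1Norm (a : ℤ → ℝ) : ℝ := ∑' i, |a i|

/-- The constant K_a = 2 Σ |a_i|·|i|. -/
def Kc (a : ℤ → ℝ) : ℝ := 2 * ∑' i : ℤ, |a i| * |(i : ℝ)|

/-- Subdivision operator (S_α c)_j = Σ_i α_{j-2i} c_i. -/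
def subdiv (α c : ℤ → ℝ) : ℤ → ℝ := fun j => ∑' i, α (j - 2 * i) * c i

/-- Decimation operator (D_ζ c)_j = Σ_i ζ_{j-i} c_{2i}. -/
def decim (ζ c : ℤ → ℝ) : ℤ → ℝ := fun j => ∑' i, ζ (j - i) * c (2 * i)

private lemma summable_of_finsupp {f : ℤ → ℝ} (h : (Function.support f).Finite) : Summable f :=
  summable_of_ne_finset_zero (s := h.toFinset)
    (fun b hb => by simpa [Function.mem_support] using fun hb' => hb (h.mem_toFinset.mpr hb'))

private lemma support_shift_fin {α : ℤ → ℝ} (h : (Function.support α).Finite) (k : ℤ) :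
    (Function.support fun i : ℤ => α (k - 2*i)).Finite := by
  have hinj : Function.Injective (fun i : ℤ => k - 2*i) := by
    intro a b hab; simp only at hab; omega
  have : (Function.support fun i : ℤ => α (k - 2*i)) =
      (fun i : ℤ => k - 2*i) ⁻¹' (Function.support α) := rfl
  rw [this]
  exact h.preimage hinj.injOn

private lemma summable_shift_mul {α : ℤ → ℝ} (h : (Function.support α).Finite) (k : ℤ)
    (g : ℤ → ℝ) : Summable fun i : ℤ => α (k - 2*i) * g i := by
  apply summable_of_finsupp
  apply Set.Finite.subset (support_shift_fin h k)
  intro i hi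
  simp only [Function.mem_support] at hi ⊢
  exact fun h0 => hi (by rw [h0, zero_mul])

private lemma shift_tsum (f : ℤ → ℝ) (i : ℤ) : ∑' l, f (i - l) = ∑' m, f m := by
  simpa using (Equiv.subLeft i).tsum_eq f

private lemma shift_summable {f : ℤ → ℝ} (hf : Summable f) (i : ℤ) :
    Summable fun l => f (i - l) := by
  exact ((Equiv.subLeft i).summable_iff).mpr hf

private lemma abs_tsum_le {f : ℤ → ℝ} (h : Summable fun i => |f i|) :
    |∑' i, f i| ≤ ∑' i, |f i| := by
  simpa only [Real.norm_eq_abs] using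
    norm_tsum_le_tsum_norm (f := f) (by simpa only [Real.norm_eq_abs] using h)

set_option maxHeartbeats 2000000

/-- Proportionality of one-level detail coefficients to first differences. -/
theorem detail_bound_one_level
    (α ζ c : ℤ → ℝ)
    (hα_fin : (Function.support α).Finite)
    (hα_even : ∑' i : ℤ, α (2 * i) = 1)
    (hα_odd : ∑' i : ℤ, α (2 * i + 1) = 1)
    (hζ_sum : Summable (fun i => |ζ i|))
    (hζ_one : ∑' i : ℤ, ζ i = 1)
    (hKζ : Summable (fun i : ℤ => |ζ i| * |(i : ℝ)|))
    (hc_bdd : ∃ M : ℝ, ∀ j : ℤ, |c j| ≤ M)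
    (hΔc : BddAbove (Set.range fun j : ℤ => |c (j + 1) - c j|)) :
    supNorm (fun k => c k - subdiv α (decim ζ c) k) ≤
      (Kc ζ * l1Norm α + Kc α * l1Norm ζ) * deltaSup c := by
  obtain ⟨M, hM⟩ := hc_bdd
  set D := deltaSup c with hDdef
  have hD0 : 0 ≤ D := Real.iSup_nonneg (fun j => abs_nonneg _)
  have hstep : ∀ j : ℤ, |c (j + 1) - c j| ≤ D := fun j => le_ciSup hΔc j
  -- difference bound
  have keyN : ∀ n : ℕ, ∀ b : ℤ, |c (b + (n : ℤ)) - c b| ≤ (n : ℝ) * D := by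
    intro n
    induction n with
    | zero => intro b; simp
    | succ n ih =>
      intro b
      have h1 := hstep (b + n)
      have ih' := ih b
      have e : (b + ((n + 1 : ℕ) : ℤ)) = (b + n) + 1 := by push_cast; ring
      rw [e]
      have htri := abs_sub_le (c ((b + n) + 1)) (c (b + n)) (c b)
      push_cast
      linarith
  have hdiff : ∀ a b : ℤ, |c a - c b| ≤ |((a - b : ℤ) : ℝ)| * D := by
    have h1 : ∀ a b : ℤ, b ≤ a → |c a - c b| ≤ |((a - b : ℤ) : ℝ)| * D := by
      intro a b hba
      obtain ⟨n, hn⟩ := Int.le.dest hba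
      subst hn
      have h2 : ((b + (n : ℤ) - b : ℤ) : ℝ) = (n : ℝ) := by push_cast; ring
      rw [h2, abs_of_nonneg (by positivity : (0:ℝ) ≤ (n:ℝ))]
      exact keyN n b
    intro a b
    rcases le_total b a with h | h
    · exact h1 a b h
    · rw [abs_sub_comm, ← abs_neg ((a - b : ℤ) : ℝ)]
      have : -((a - b : ℤ) : ℝ) = ((b - a : ℤ) : ℝ) := by push_cast; ring
      rw [this]
      exact h1 b a h
  -- sum of shifted α equals 1
  have hα1 : ∀ k : ℤ, ∑' i : ℤ, α (k - 2*i) = 1 := by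
    intro k
    rcases Int.even_or_odd k with ⟨m, hm⟩ | ⟨m, hm⟩
    · have he : ∀ i : ℤ, k - 2*i = 2*(m - i) := by intro i; omega
      calc ∑' i : ℤ, α (k - 2*i) = ∑' i : ℤ, (fun j : ℤ => α (2*j)) (m - i) := by
            simp only [he]
        _ = ∑' j : ℤ, α (2*j) := shift_tsum (fun j : ℤ => α (2*j)) m
        _ = 1 := hα_even
    · have he : ∀ i : ℤ, k - 2*i = 2*(m - i) + 1 := by intro i; omega
      calc ∑' i : ℤ, α (k - 2*i) = ∑' i : ℤ, (fun j : ℤ => α (2*j + 1)) (m - i) := by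
            simp only [he]
        _ = ∑' j : ℤ, α (2*j + 1) := shift_tsum (fun j : ℤ => α (2*j + 1)) m
        _ = 1 := hα_odd
  set g : ℤ → ℝ := decim ζ c with hg
  set L : ℝ := l1Norm ζ with hL
  set S2 : ℝ := ∑' m : ℤ, |ζ m| * |(m : ℝ)| with hS2
  have hL0 : 0 ≤ L := tsum_nonneg (fun _ => abs_nonneg _)
  have hS20 : 0 ≤ S2 := tsum_nonneg (fun _ => mul_nonneg (abs_nonneg _) (abs_nonneg _))
  have hKcζ : Kc ζ = 2 * S2 := rfl
  have hKα0 : 0 ≤ Kc α := by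
    have : (0:ℝ) ≤ ∑' i : ℤ, |α i| * |(i:ℝ)| :=
      tsum_nonneg (fun _ => mul_nonneg (abs_nonneg _) (abs_nonneg _))
    unfold Kc; linarith
  have hl1α0 : 0 ≤ l1Norm α := tsum_nonneg (fun _ => abs_nonneg _)
  -- step B : c k - g i as a ζ-sum
  have hBi : ∀ k i : ℤ, c k - g i = ∑' l : ℤ, ζ (i - l) * (c k - c (2*l)) := by
    intro k i
    have hzabs : Summable fun l => |ζ (i - l)| := shift_summable hζ_sum i
    have hz : Summable fun l => ζ (i - l) := by
      apply Summable.of_abs hzabs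
    have hs1 : Summable fun l => ζ (i - l) * c k := hz.mul_right _
    have hs2 : Summable fun l => ζ (i - l) * c (2*l) := by
      apply Summable.of_abs
      apply Summable.of_nonneg_of_le (fun l => abs_nonneg _) _ (hzabs.mul_right M)
      intro l
      rw [abs_mul]
      exact mul_le_mul_of_nonneg_left (hM _) (abs_nonneg _)
    have : ∑' l : ℤ, ζ (i - l) * (c k - c (2*l))
        = (∑' l : ℤ, ζ (i - l) * c k) - ∑' l : ℤ, ζ (i - l) * c (2*l) := by
      rw [← Summable.tsum_sub hs1 hs2]
      congr 1; funext l; ring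
    rw [this, tsum_mul_right, shift_tsum ζ i, hζ_one, one_mul]
    rfl
  -- step A
  have hA : ∀ k : ℤ, c k - subdiv α g k = ∑' i : ℤ, α (k - 2*i) * (c k - g i) := by
    intro k
    have hs1 : Summable fun i : ℤ => α (k - 2*i) * c k := summable_shift_mul hα_fin k _
    have hs2 : Summable fun i : ℤ => α (k - 2*i) * g i := summable_shift_mul hα_fin k _
    have : ∑' i : ℤ, α (k - 2*i) * (c k - g i)
        = (∑' i : ℤ, α (k - 2*i) * c k) - ∑' i : ℤ, α (k - 2*i) * g i := by
      rw [← Summable.tsum_sub hs1 hs2]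
      congr 1; funext i; ring
    rw [this, tsum_mul_right, hα1 k, one_mul]
    rfl
  -- bound on |c k - g i|
  have hT : ∀ k i : ℤ, |c k - g i| ≤ (|((k - 2*i : ℤ) : ℝ)| * L + Kc ζ) * D := by
    intro k i
    set A : ℝ := |((k - 2*i : ℤ) : ℝ)| with hA2
    have hA0 : 0 ≤ A := abs_nonneg _
    have hzabs : Summable fun l => |ζ (i - l)| := shift_summable hζ_sum i
    have hzm : Summable fun l => |ζ (i - l)| * |((i - l : ℤ) : ℝ)| := by
      have := shift_summable hKζ i
      simpa using this
    set u : ℤ → ℝ := fun l => |ζ (i - l)| * (A * D) + (|ζ (i - l)| * |((i - l : ℤ) : ℝ)|) * (2 * D)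
      with hu
    have hus : Summable u := (hzabs.mul_right _).add (hzm.mul_right _)
    have hptw : ∀ l : ℤ, |ζ (i - l) * (c k - c (2*l))| ≤ u l := by
      intro l
      rw [abs_mul]
      have h1 : |c k - c (2*l)| ≤ |((k - 2*l : ℤ) : ℝ)| * D := hdiff k (2*l)
      have h2 : |((k - 2*l : ℤ) : ℝ)| ≤ A + 2 * |((i - l : ℤ) : ℝ)| := by
        rw [hA2]
        have hz2 : |(k - 2*l : ℤ)| ≤ |(k - 2*i : ℤ)| + 2 * |(i - l : ℤ)| := by
          rcases abs_cases (k - 2*i) with ⟨h, _⟩ | ⟨h, _⟩ <;>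
          rcases abs_cases (i - l) with ⟨h', _⟩ | ⟨h', _⟩ <;>
          rcases abs_cases (k - 2*l) with ⟨h'', _⟩ | ⟨h'', _⟩ <;> omega
        calc |((k - 2*l : ℤ) : ℝ)| = ((|(k - 2*l : ℤ)| : ℤ) : ℝ) := by
              rw [Int.cast_abs]
          _ ≤ ((|(k - 2*i : ℤ)| + 2 * |(i - l : ℤ)| : ℤ) : ℝ) := by exact_mod_cast hz2
          _ = |((k - 2*i : ℤ) : ℝ)| + 2 * |((i - l : ℤ) : ℝ)| := by push_cast; ring
      calc |ζ (i - l)| * |c k - c (2*l)|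
          ≤ |ζ (i - l)| * ((A + 2 * |((i - l : ℤ) : ℝ)|) * D) := by
            apply mul_le_mul_of_nonneg_left _ (abs_nonneg _)
            exact le_trans h1 (mul_le_mul_of_nonneg_right h2 hD0)
        _ = u l := by rw [hu]; ring
    have habs : Summable fun l => |ζ (i - l) * (c k - c (2*l))| :=
      Summable.of_nonneg_of_le (fun l => abs_nonneg _) hptw hus
    rw [hBi k i]
    calc |∑' l : ℤ, ζ (i - l) * (c k - c (2*l))|
        ≤ ∑' l : ℤ, |ζ (i - l) * (c k - c (2*l))| := abs_tsum_le habs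
      _ ≤ ∑' l : ℤ, u l := Summable.tsum_le_tsum hptw habs hus
      _ = (∑' l : ℤ, |ζ (i - l)|) * (A * D)
          + (∑' l : ℤ, |ζ (i - l)| * |((i - l : ℤ) : ℝ)|) * (2 * D) := by
          rw [hu, Summable.tsum_add (hzabs.mul_right _) (hzm.mul_right _), tsum_mul_right, tsum_mul_right]
      _ = L * (A * D) + S2 * (2 * D) := by
          rw [hL, hS2, l1Norm]
          congr 2
          · exact shift_tsum (fun m => |ζ m|) i
          · simpa using shift_tsum (fun m => |ζ m| * |(m : ℝ)|) i
      _ = (A * L + Kc ζ) * D := by rw [hKcζ]; ring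
  -- pointwise bound on detail
  have hpt : ∀ k : ℤ, |c k - subdiv α g k| ≤ (Kc ζ * l1Norm α + Kc α * L) * D := by
    intro k
    set v : ℤ → ℝ := fun i => |α (k - 2*i)| * ((|((k - 2*i : ℤ) : ℝ)| * L + Kc ζ) * D) with hv
    have hvfin : (Function.support v).Finite := by
      apply Set.Finite.subset (support_shift_fin hα_fin k)
      intro i hi
      simp only [Function.mem_support] at hi ⊢
      exact fun h0 => hi (by rw [hv]; simp [h0])
    have hvs : Summable v := summable_of_finsupp hvfin
    have habs : Summable fun i : ℤ => |α (k - 2*i) * (c k - g i)| := by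
      apply summable_of_finsupp
      apply Set.Finite.subset (support_shift_fin hα_fin k)
      intro i hi
      simp only [Function.mem_support] at hi ⊢
      exact fun h0 => hi (by simp [h0])
    have hptw : ∀ i : ℤ, |α (k - 2*i) * (c k - g i)| ≤ v i := by
      intro i
      rw [abs_mul, hv]
      exact mul_le_mul_of_nonneg_left (hT k i) (abs_nonneg _)
    rw [hA k]
    have hαabs : Summable fun m : ℤ => |α m| :=
      summable_of_finsupp (hα_fin.subset (by
        intro m hm
        simp only [Function.mem_support] at hm ⊢
        exact fun h0 => hm (by simp [h0])))
    have hαm : Summable fun m : ℤ => |α m| * |(m : ℝ)| :=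
      summable_of_finsupp (hα_fin.subset (by
        intro m hm
        simp only [Function.mem_support] at hm ⊢
        exact fun h0 => hm (by simp [h0])))
    have hinj : Function.Injective (fun i : ℤ => k - 2*i) := by
      intro a b hab; simp only at hab; omega
    have hsum1 : Summable fun i : ℤ => |α (k - 2*i)| * |((k - 2*i : ℤ) : ℝ)| := by
      apply summable_of_finsupp
      apply Set.Finite.subset (support_shift_fin hα_fin k)
      intro i hi
      simp only [Function.mem_support] at hi ⊢
      exact fun h0 => hi (by simp [h0])
    have hsum2 : Summable fun i : ℤ => |α (k - 2*i)| := by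
      apply summable_of_finsupp
      apply Set.Finite.subset (support_shift_fin hα_fin k)
      intro i hi
      simp only [Function.mem_support] at hi ⊢
      exact fun h0 => hi (by simp [h0])
    have hb1 : ∑' i : ℤ, |α (k - 2*i)| * |((k - 2*i : ℤ) : ℝ)| ≤ ∑' m : ℤ, |α m| * |(m : ℝ)| := by
      apply Summable.tsum_le_tsum_of_inj (fun i : ℤ => k - 2*i) hinj
        (fun m _ => mul_nonneg (abs_nonneg _) (abs_nonneg _)) (fun i => le_rfl) hsum1 hαm
    have hb2 : ∑' i : ℤ, |α (k - 2*i)| ≤ l1Norm α := by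
      apply Summable.tsum_le_tsum_of_inj (fun i : ℤ => k - 2*i) hinj
        (fun m _ => abs_nonneg _) (fun i => le_rfl) hsum2 hαabs
    calc |∑' i : ℤ, α (k - 2*i) * (c k - g i)|
        ≤ ∑' i : ℤ, |α (k - 2*i) * (c k - g i)| := abs_tsum_le habs
      _ ≤ ∑' i : ℤ, v i := Summable.tsum_le_tsum hptw habs hvs
      _ = (∑' i : ℤ, |α (k - 2*i)| * |((k - 2*i : ℤ) : ℝ)|) * (L * D)
          + (∑' i : ℤ, |α (k - 2*i)|) * (Kc ζ * D) := by
          rw [← tsum_mul_right, ← tsum_mul_right, ← Summable.tsum_add (hsum1.mul_right _) (hsum2.mul_right _)]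
          congr 1; funext i; rw [hv]; ring
      _ ≤ (∑' m : ℤ, |α m| * |(m : ℝ)|) * (L * D) + l1Norm α * (Kc ζ * D) := by
          apply add_le_add
          · exact mul_le_mul_of_nonneg_right hb1 (mul_nonneg hL0 hD0)
          · apply mul_le_mul_of_nonneg_right hb2
            apply mul_nonneg _ hD0
            rw [hKcζ]; linarith
      _ ≤ (Kc ζ * l1Norm α + Kc α * L) * D := by
          have h5 : (∑' m : ℤ, |α m| * |(m : ℝ)|) * (L * D) ≤ Kc α * L * D := by
            have hs : (0:ℝ) ≤ ∑' m : ℤ, |α m| * |(m : ℝ)| :=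
              tsum_nonneg (fun _ => mul_nonneg (abs_nonneg _) (abs_nonneg _))
            have : (∑' m : ℤ, |α m| * |(m : ℝ)|) ≤ Kc α := by unfold Kc; linarith
            calc (∑' m : ℤ, |α m| * |(m : ℝ)|) * (L * D) ≤ Kc α * (L * D) :=
                  mul_le_mul_of_nonneg_right this (mul_nonneg hL0 hD0)
              _ = Kc α * L * D := by ring
          linarith [h5]
  have hB0 : 0 ≤ (Kc ζ * l1Norm α + Kc α * L) * D := by
    have hKζ0 : (0:ℝ) ≤ Kc ζ := by rw [hKcζ]; linarith
    have := mul_nonneg (add_nonneg (mul_nonneg hKζ0 hl1α0) (mul_nonneg hKα0 hL0)) hD0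
    exact this
  exact Real.iSup_le (fun k => hpt k) hB0
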